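/- For every n ≥ 1, the sum over i from 1 to n of t_i · h_{2i} equals 1 - h_{2n+1}. -/

import Mathlib

def t (n : ℕ) : ℤ := (-1) ^ ((Nat.digits 2 n).sum)

def h : ℕ → ℤ
  | 0 => 0
  | 1 => 1
  | (n + 2) => t (n + 2) * h (n + 1) + h n

lemma t_odd (i : ℕ) : t (2 * i + 1) = - t i := by
  unfold t
  rw [Nat.digits_def' (by norm_num : 1 < 2) (Nat.succ_pos _)]
  have h1 : (2 * i + 1) % 2 = 1 := by omega
  have h2 : (2 * i + 1) / 2 = i := by omega
  rw [h1, h2]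
  simp [pow_succ, List.sum_cons, mul_comm]
  rw [pow_add]; ring

theorem stmt17 : ∀ n : ℕ, 1 ≤ n → (∑ i ∈ Finset.Icc 1 n, t i * h (2 * i)) = 1 - h (2 * n + 1) := by
  intro n hn
  induction n with
  | zero => omega
  | succ m ih =>
    rcases Nat.eq_zero_or_pos m with hm | hm
    · subst hm
      simp [t, h]
    · rw [Finset.sum_Icc_succ_top (by omega : 1 ≤ m + 1), ih hm]
      have hrec : h (2 * m + 1 + 2) = t (2 * m + 1 + 2) * h (2 * m + 1 + 1) + h (2 * m + 1) := by
        rw [h]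
      have e1 : 2 * (m + 1) + 1 = 2 * m + 1 + 2 := by ring
      have e2 : 2 * (m + 1) = 2 * m + 1 + 1 := by ring
      have ht : t (2 * m + 1 + 2) = - t (m + 1) := by
        have : 2 * m + 1 + 2 = 2 * (m + 1) + 1 := by ring
        rw [this]; exact t_odd (m + 1)
      rw [e1, e2, hrec, ht]
      ring
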